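/- arXiv:1902.02029 — 2 statements merged into one kernel-verified Lean document; each statement's English description precedes it below -/
import Mathlib

section
/- Let d₀ be the length metric on ℝ × X defined by d₀((θ₁,u₁),(θ₂,u₂)) := inf over C¹ paths σ : [0,1] → ℝ × X joining the two points of ∫₀¹ ‖σ'(τ)‖_{σ(τ)} dτ, where ‖(θ̃,ũ)‖_{(θ,u)} := (θ̃² + ‖T_θ ũ‖²_X)^{1/2}. Then the metric space (ℝ × X, d₀) is complete. -/
open MeasureTheory Filter
open Set

/-- Length of a path `σ : [0,1] → ℝ × X` with respect to the moving norms
`‖(θ̃,ũ)‖_{(θ,u)} = (θ̃² + ‖T_θ ũ‖²)^{1/2}`. -/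
noncomputable def pathLen {X : Type*} [NormedAddCommGroup X] [NormedSpace ℝ X]
    (T : ℝ → X →L[ℝ] X) (σ : ℝ → ℝ × X) : ℝ :=
  ∫ τ in (0:ℝ)..1,
    Real.sqrt ((deriv σ τ).1 ^ 2 + ‖T ((σ τ).1) (deriv σ τ).2‖ ^ 2)

/-- The length metric `d₀` on `ℝ × X` from the paper. -/
noncomputable def d0 {X : Type*} [NormedAddCommGroup X] [NormedSpace ℝ X]
    (T : ℝ → X →L[ℝ] X) (p q : ℝ × X) : ℝ :=
  sInf { L : ℝ | ∃ σ : ℝ → ℝ × X, ContDiffOn ℝ 1 σ (Set.Icc 0 1) ∧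
      σ 0 = p ∧ σ 1 = q ∧ L = pathLen T σ }

section Helpers

variable {X : Type*} [NormedAddCommGroup X] [NormedSpace ℝ X]

lemma opBound [CompleteSpace X] (T : ℝ → X →L[ℝ] X)
    (hTcont : ∀ u : X, Continuous fun θ : ℝ => T θ u) (R : ℝ) :
    ∃ C : ℝ, 0 ≤ C ∧ ∀ s : ℝ, |s| ≤ R → ‖T s‖ ≤ C := by
  have h : ∀ x : X, ∃ C, ∀ i : Icc (-R) R, ‖T i x‖ ≤ C := by
    intro x
    obtain ⟨C, hC⟩ := isCompact_Icc.exists_bound_of_continuousOn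
      (s := Icc (-R) R) ((hTcont x).continuousOn)
    exact ⟨C, fun i => hC i i.2⟩
  obtain ⟨C', hC'⟩ := banach_steinhaus (g := fun i : Icc (-R) R => T i) h
  refine ⟨max C' 0, le_max_right _ _, fun s hs => ?_⟩
  exact le_trans (hC' ⟨s, abs_le.mp hs⟩) (le_max_left _ _)

lemma jointCont [CompleteSpace X] (T : ℝ → X →L[ℝ] X)
    (hTcont : ∀ u : X, Continuous fun θ : ℝ => T θ u) :
    Continuous fun z : ℝ × X => T z.1 z.2 := by
  rw [continuous_iff_continuousAt]
  rintro ⟨θ₀, v₀⟩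
  obtain ⟨C, hC0, hC⟩ := opBound T hTcont (|θ₀| + 1)
  rw [ContinuousAt, tendsto_iff_norm_sub_tendsto_zero]
  have h1 : ∀ᶠ z : ℝ × X in nhds (θ₀, v₀), |z.1 - θ₀| ≤ 1 := by
    have hc : Continuous fun z : ℝ × X => |z.1 - θ₀| :=
      (continuous_fst.sub continuous_const).abs
    have : Tendsto (fun z : ℝ × X => |z.1 - θ₀|) (nhds (θ₀, v₀)) (nhds 0) := by
      simpa using hc.tendsto (θ₀, v₀)
    exact this.eventually_le_const (by norm_num)
  refine squeeze_zero' (g := fun z : ℝ × X => C * ‖z.2 - v₀‖ + ‖T z.1 v₀ - T θ₀ v₀‖)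
    (Eventually.of_forall fun z => norm_nonneg _)
    (h1.mono fun z hz => ?_) ?_
  · have hz1 : ‖T z.1‖ ≤ C := hC z.1 (by
      have := abs_sub_abs_le_abs_sub z.1 θ₀
      linarith [abs_le.mp hz])
    calc ‖T z.1 z.2 - T θ₀ v₀‖
        = ‖T z.1 (z.2 - v₀) + (T z.1 v₀ - T θ₀ v₀)‖ := by rw [map_sub]; abel_nf
      _ ≤ ‖T z.1 (z.2 - v₀)‖ + ‖T z.1 v₀ - T θ₀ v₀‖ := norm_add_le _ _
      _ ≤ C * ‖z.2 - v₀‖ + ‖T z.1 v₀ - T θ₀ v₀‖ := by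
          gcongr
          exact (T z.1).le_of_opNorm_le hz1 _
  · have hg : Continuous fun z : ℝ × X =>
        C * ‖z.2 - v₀‖ + ‖T z.1 v₀ - T θ₀ v₀‖ := by
      apply Continuous.add
      · exact continuous_const.mul ((continuous_snd.sub continuous_const).norm)
      · exact (((hTcont v₀).comp continuous_fst).sub continuous_const).norm
    have := hg.tendsto (θ₀, v₀)
    simpa using this

lemma pathLen_nonneg (T : ℝ → X →L[ℝ] X) (σ : ℝ → ℝ × X) : 0 ≤ pathLen T σ :=
  intervalIntegral.integral_nonneg (by norm_num) (fun _ _ => Real.sqrt_nonneg _)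

lemma d0_set_nonempty (T : ℝ → X →L[ℝ] X) (p q : ℝ × X) :
    { L : ℝ | ∃ σ : ℝ → ℝ × X, ContDiffOn ℝ 1 σ (Set.Icc 0 1) ∧
      σ 0 = p ∧ σ 1 = q ∧ L = pathLen T σ }.Nonempty := by
  refine ⟨pathLen T (fun τ : ℝ => p + τ • (q - p)), fun τ : ℝ => p + τ • (q - p), ?_, by simp, by simp, rfl⟩
  exact (contDiff_const.add (contDiff_id.smul contDiff_const)).contDiffOn

lemma d0_set_bddBelow (T : ℝ → X →L[ℝ] X) (p q : ℝ × X) :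
    BddBelow { L : ℝ | ∃ σ : ℝ → ℝ × X, ContDiffOn ℝ 1 σ (Set.Icc 0 1) ∧
      σ 0 = p ∧ σ 1 = q ∧ L = pathLen T σ } :=
  ⟨0, by rintro L ⟨σ, -, -, -, rfl⟩; exact pathLen_nonneg T σ⟩

lemma d0_nonneg (T : ℝ → X →L[ℝ] X) (p q : ℝ × X) : 0 ≤ d0 T p q :=
  le_csInf (d0_set_nonempty T p q) (by rintro L ⟨σ, -, -, -, rfl⟩; exact pathLen_nonneg T σ)

lemma d0_le (T : ℝ → X →L[ℝ] X)
    (hTcont : ∀ u : X, Continuous fun θ : ℝ => T θ u) (p q : ℝ × X) (M : ℝ)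
    (hM : ∀ s ∈ uIcc p.1 q.1, ‖T s (q.2 - p.2)‖ ≤ M) :
    d0 T p q ≤ Real.sqrt ((q.1 - p.1) ^ 2 + M ^ 2) := by
  set σ : ℝ → ℝ × X := fun τ : ℝ => p + τ • (q - p) with hσdef
  have hder : ∀ τ : ℝ, HasDerivAt σ (q - p) τ := by
    intro τ
    simpa [hσdef] using ((hasDerivAt_id τ).smul_const (q - p)).const_add p
  have hderiv : ∀ τ : ℝ, deriv σ τ = q - p := fun τ => (hder τ).deriv
  have hle : d0 T p q ≤ pathLen T σ := by
    apply csInf_le (d0_set_bddBelow T p q)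
    exact ⟨σ, (contDiff_const.add (contDiff_id.smul contDiff_const)).contDiffOn,
      by simp [hσdef], by simp [hσdef], rfl⟩
  refine hle.trans ?_
  have hM0 : 0 ≤ M := (norm_nonneg _).trans (hM p.1 left_mem_uIcc)
  have hmem : ∀ τ ∈ Set.Icc (0:ℝ) 1, (σ τ).1 ∈ uIcc p.1 q.1 := by
    intro τ hτ
    have : (σ τ).1 = p.1 + τ * (q.1 - p.1) := rfl
    rw [this]
    rcases le_total p.1 q.1 with h | h
    · rw [uIcc_of_le h]
      constructor <;> nlinarith [hτ.1, hτ.2]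
    · rw [uIcc_of_ge h]
      constructor <;> nlinarith [hτ.1, hτ.2]
  have hcont : ContinuousOn
      (fun τ => Real.sqrt ((deriv σ τ).1 ^ 2 + ‖T ((σ τ).1) (deriv σ τ).2‖ ^ 2))
      (uIcc (0:ℝ) 1) := by
    apply Real.continuous_sqrt.comp_continuousOn
    apply ContinuousOn.add
    · exact (continuousOn_const.congr (fun τ _ => by rw [hderiv])).pow 2
    · have h1 : Continuous fun τ : ℝ => T ((σ τ).1) (q.2 - p.2) :=
        (hTcont (q.2 - p.2)).comp (by continuity)
      exact ((h1.continuousOn.congr (fun τ _ => by rw [hderiv]; rfl)).norm).pow 2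
  calc pathLen T σ ≤ ∫ _ in (0:ℝ)..1, Real.sqrt ((q.1 - p.1) ^ 2 + M ^ 2) := by
        apply intervalIntegral.integral_mono_on (by norm_num)
          (hcont.intervalIntegrable) (intervalIntegrable_const)
        intro τ hτ
        rw [hderiv]
        apply Real.sqrt_le_sqrt
        have := hM _ (hmem τ hτ)
        have h2 : ‖T ((σ τ).1) (q - p).2‖ ^ 2 ≤ M ^ 2 := by
          apply pow_le_pow_left₀ (norm_nonneg _) _ 2
          exact this
        have h3 : (q - p).1 = q.1 - p.1 := rfl
        rw [h3]
        linarith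
    _ = Real.sqrt ((q.1 - p.1) ^ 2 + M ^ 2) := by simp

lemma path_bounds [CompleteSpace X] (T : ℝ → X →L[ℝ] X)
    (hT0 : T 0 = ContinuousLinearMap.id ℝ X)
    (hTadd : ∀ θ₁ θ₂ : ℝ, T (θ₁ + θ₂) = (T θ₁).comp (T θ₂))
    (hTcont : ∀ u : X, Continuous fun θ : ℝ => T θ u)
    {σ : ℝ → ℝ × X} (hσ : ContDiffOn ℝ 1 σ (Set.Icc 0 1)) :
    |(σ 1).1 - (σ 0).1| ≤ pathLen T σ ∧
    ∀ A r : ℝ, 0 ≤ r → pathLen T σ ≤ r → (∀ s : ℝ, |s| ≤ r → ‖T s‖ ≤ A) →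
      ‖(σ 1).2 - (σ 0).2‖ ≤ ‖T (-(σ 0).1)‖ * (A * pathLen T σ) := by
  set g : ℝ → ℝ × X := derivWithin σ (Set.Icc 0 1) with hgdef
  have hgc : ContinuousOn g (Set.Icc 0 1) :=
    hσ.continuousOn_derivWithin (uniqueDiffOn_Icc one_pos) le_rfl
  have hdg : ∀ τ ∈ Set.Ioo (0:ℝ) 1, deriv σ τ = g τ := by
    intro τ hτ
    exact (derivWithin_of_mem_nhds (Icc_mem_nhds hτ.1 hτ.2)).symm
  have hder : ∀ τ ∈ Set.Ioo (0:ℝ) 1, HasDerivAt σ (g τ) τ := by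
    intro τ hτ
    have hn : Set.Icc (0:ℝ) 1 ∈ nhds τ := Icc_mem_nhds hτ.1 hτ.2
    have hda : DifferentiableAt ℝ σ τ :=
      ((hσ.differentiableOn one_ne_zero) τ (Set.Ioo_subset_Icc_self hτ)).differentiableAt hn
    rw [← hdg τ hτ]
    exact hda.hasDerivAt
  set F : ℝ → ℝ := fun τ => Real.sqrt ((g τ).1 ^ 2 + ‖T ((σ τ).1) (g τ).2‖ ^ 2) with hFdef
  have hFc : ContinuousOn F (Set.Icc 0 1) := by
    apply Real.continuous_sqrt.comp_continuousOn
    apply ContinuousOn.add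
    · exact hgc.fst.pow 2
    · exact (((jointCont T hTcont).comp_continuousOn
        ((hσ.continuousOn.fst).prodMk hgc.snd)).norm).pow 2
  have hFnn : ∀ τ, 0 ≤ F τ := fun τ => Real.sqrt_nonneg _
  have hlen : pathLen T σ = ∫ τ in (0:ℝ)..1, F τ := by
    unfold pathLen
    apply intervalIntegral.integral_congr_ae
    have h1 : (volume : Measure ℝ) {(1:ℝ)} = 0 := Real.volume_singleton
    rw [MeasureTheory.ae_iff]
    refine MeasureTheory.measure_mono_null ?_ h1
    intro x hx
    simp only [Set.mem_setOf_eq, Classical.not_imp] at hx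
    obtain ⟨hx1, hx2⟩ := hx
    rw [Set.uIoc_of_le (by norm_num : (0:ℝ) ≤ 1)] at hx1
    by_contra hne
    have hxI : x ∈ Set.Ioo (0:ℝ) 1 := ⟨hx1.1, lt_of_le_of_ne hx1.2 hne⟩
    exact hx2 (by rw [hdg x hxI])
  have hFi : IntervalIntegrable F volume 0 1 :=
    (hFc.mono (by rw [Set.uIcc_of_le (by norm_num : (0:ℝ) ≤ 1)])).intervalIntegrable
  have habs : IntervalIntegrable (fun τ => |(g τ).1|) volume 0 1 :=
    ((hgc.fst.abs).mono (by rw [Set.uIcc_of_le (by norm_num : (0:ℝ) ≤ 1)])).intervalIntegrable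
  have hF_ge1 : ∀ τ, |(g τ).1| ≤ F τ := by
    intro τ
    rw [hFdef, ← Real.sqrt_sq_eq_abs]
    exact Real.sqrt_le_sqrt (le_add_of_nonneg_right (by positivity))
  have hF_ge2 : ∀ τ, ‖T ((σ τ).1) (g τ).2‖ ≤ F τ := by
    intro τ
    nth_rewrite 1 [← Real.sqrt_sq (norm_nonneg (T ((σ τ).1) (g τ).2))]
    exact Real.sqrt_le_sqrt (le_add_of_nonneg_left (by positivity))
  -- FTC for the first component
  have hθt : ∀ t ∈ Set.Icc (0:ℝ) 1, (σ t).1 - (σ 0).1 = ∫ τ in (0:ℝ)..t, (g τ).1 := by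
    intro t ht
    symm
    apply intervalIntegral.integral_eq_sub_of_hasDeriv_right_of_le ht.1
    · exact (hσ.continuousOn.mono (Set.Icc_subset_Icc le_rfl ht.2)).fst
    · intro x hx
      have hxI : x ∈ Set.Ioo (0:ℝ) 1 := ⟨hx.1, lt_of_lt_of_le hx.2 ht.2⟩
      have h := ((ContinuousLinearMap.fst ℝ ℝ X).hasFDerivAt.comp x
        (hder x hxI).hasFDerivAt).hasDerivAt
      simp only [ContinuousLinearMap.coe_fst', Function.comp_def,
        ContinuousLinearMap.coe_comp', ContinuousLinearMap.smulRight_apply,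
        ContinuousLinearMap.one_apply, one_smul, ContinuousLinearMap.toSpanSingleton_apply] at h
      exact h.hasDerivWithinAt
    · have : ContinuousOn (fun τ => (g τ).1) (Set.uIcc 0 t) := by
        rw [Set.uIcc_of_le ht.1]
        exact hgc.fst.mono (Set.Icc_subset_Icc le_rfl ht.2)
      exact this.intervalIntegrable
  -- partial length bound on first component
  have hθ_all : ∀ t ∈ Set.Icc (0:ℝ) 1, |(σ t).1 - (σ 0).1| ≤ pathLen T σ := by
    intro t ht
    rw [hθt t ht, hlen]
    calc |∫ τ in (0:ℝ)..t, (g τ).1| ≤ ∫ τ in (0:ℝ)..t, |(g τ).1| :=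
          intervalIntegral.abs_integral_le_integral_abs ht.1
      _ ≤ ∫ τ in (0:ℝ)..1, |(g τ).1| := by
          apply intervalIntegral.integral_mono_interval le_rfl ht.1 ht.2
          · exact Filter.Eventually.of_forall (fun τ => abs_nonneg _)
          · exact habs
      _ ≤ ∫ τ in (0:ℝ)..1, F τ :=
          intervalIntegral.integral_mono_on (by norm_num) habs hFi (fun τ _ => hF_ge1 τ)
  refine ⟨hθ_all 1 (by norm_num), ?_⟩
  intro A r hr hLr hA
  have hA0 : 0 ≤ A := (norm_nonneg _).trans (hA 0 (by simpa using hr))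
  -- FTC for the second component
  have hu : (σ 1).2 - (σ 0).2 = ∫ τ in (0:ℝ)..1, (g τ).2 := by
    have hd2 : ∀ x ∈ Set.Ioo (0:ℝ) 1,
        HasDerivWithinAt (fun τ => (σ τ).2) ((g x).2) (Set.Ioi x) x := by
      intro x hx
      have h := ((ContinuousLinearMap.snd ℝ ℝ X).hasFDerivAt.comp x
        (hder x hx).hasFDerivAt).hasDerivAt
      simp only [ContinuousLinearMap.coe_snd', Function.comp_def,
        ContinuousLinearMap.coe_comp', ContinuousLinearMap.smulRight_apply,
        ContinuousLinearMap.one_apply, one_smul, ContinuousLinearMap.toSpanSingleton_apply] at h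
      exact h.hasDerivWithinAt
    exact (intervalIntegral.integral_eq_sub_of_hasDeriv_right_of_le
      (f := fun τ => (σ τ).2) (f' := fun τ => (g τ).2) (by norm_num)
      hσ.continuousOn.snd hd2
      (((hgc.snd).mono
        (by rw [Set.uIcc_of_le (by norm_num : (0:ℝ) ≤ 1)])).intervalIntegrable)).symm
  have hginti : IntervalIntegrable (fun τ => (g τ).2) volume 0 1 :=
    ((hgc.snd).mono
      (by rw [Set.uIcc_of_le (by norm_num : (0:ℝ) ≤ 1)])).intervalIntegrable
  have hinv : ∀ w : X, T (-(σ 0).1) (T ((σ 0).1) w) = w := by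
    intro w
    rw [← ContinuousLinearMap.comp_apply, ← hTadd]
    simp [hT0]
  have hnormint : IntervalIntegrable (fun τ => ‖T ((σ 0).1) (g τ).2‖) volume 0 1 := by
    have : ContinuousOn (fun τ => ‖T ((σ 0).1) (g τ).2‖) (Set.Icc 0 1) :=
      (((T ((σ 0).1)).continuous.comp_continuousOn hgc.snd).norm)
    exact (this.mono (by rw [Set.uIcc_of_le (by norm_num : (0:ℝ) ≤ 1)])).intervalIntegrable
  have key : ∀ τ ∈ Set.Icc (0:ℝ) 1, ‖T ((σ 0).1) (g τ).2‖ ≤ A * F τ := by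
    intro τ hτ
    have htr : T ((σ 0).1) (g τ).2 = T ((σ 0).1 - (σ τ).1) (T ((σ τ).1) (g τ).2) := by
      rw [← ContinuousLinearMap.comp_apply, ← hTadd]
      ring_nf
    rw [htr]
    calc ‖T ((σ 0).1 - (σ τ).1) (T ((σ τ).1) (g τ).2)‖
        ≤ ‖T ((σ 0).1 - (σ τ).1)‖ * ‖T ((σ τ).1) (g τ).2‖ :=
          (T _).le_opNorm _
      _ ≤ A * F τ := by
          apply mul_le_mul _ (hF_ge2 τ) (norm_nonneg _) hA0
          apply hA
          rw [abs_sub_comm]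
          exact (hθ_all τ hτ).trans hLr
  calc ‖(σ 1).2 - (σ 0).2‖ = ‖T (-(σ 0).1) (T ((σ 0).1) ((σ 1).2 - (σ 0).2))‖ := by
        rw [hinv]
    _ ≤ ‖T (-(σ 0).1)‖ * ‖T ((σ 0).1) ((σ 1).2 - (σ 0).2)‖ := (T _).le_opNorm _
    _ ≤ ‖T (-(σ 0).1)‖ * (A * pathLen T σ) := by
        apply mul_le_mul_of_nonneg_left _ (norm_nonneg _)
        rw [hu, ← ContinuousLinearMap.intervalIntegral_comp_comm _ hginti]
        calc ‖∫ τ in (0:ℝ)..1, T ((σ 0).1) (g τ).2‖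
            ≤ ∫ τ in (0:ℝ)..1, ‖T ((σ 0).1) (g τ).2‖ :=
              intervalIntegral.norm_integral_le_integral_norm (by norm_num)
          _ ≤ ∫ τ in (0:ℝ)..1, A * F τ :=
              intervalIntegral.integral_mono_on (by norm_num) hnormint
                (hFi.const_mul A) key
          _ = A * pathLen T σ := by
              rw [hlen, ← intervalIntegral.integral_const_mul]

end Helpers

/-- `(ℝ × X, d₀)` is complete. -/
theorem stmt_3
    {X : Type*} [NormedAddCommGroup X] [NormedSpace ℝ X] [CompleteSpace X]
    (T : ℝ → X →L[ℝ] X)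
    (hT0 : T 0 = ContinuousLinearMap.id ℝ X)
    (hTadd : ∀ θ₁ θ₂ : ℝ, T (θ₁ + θ₂) = (T θ₁).comp (T θ₂))
    (hTcont : ∀ u : X, Continuous fun θ : ℝ => T θ u) :
    ∀ p : ℕ → ℝ × X,
      (∀ ε : ℝ, 0 < ε → ∃ n₀ : ℕ, ∀ m n : ℕ, n₀ ≤ m → n₀ ≤ n →
        d0 T (p m) (p n) < ε) →
      ∃ q : ℝ × X, Tendsto (fun n => d0 T (p n) q) atTop (nhds 0) := by
  intro p hC
  have hθle : ∀ m n : ℕ, |(p n).1 - (p m).1| ≤ d0 T (p m) (p n) := by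
    intro m n
    apply le_csInf (d0_set_nonempty T (p m) (p n))
    rintro L ⟨σ, hσ, h0, h1, rfl⟩
    have h := (path_bounds T hT0 hTadd hTcont hσ).1
    rw [h0, h1] at h
    exact h
  obtain ⟨N₁, hN₁⟩ := hC 1 one_pos
  set R : ℝ := |(p N₁).1| + 1 with hRdef
  obtain ⟨C₁, hC₁0, hC₁⟩ := opBound T hTcont 1
  obtain ⟨CR, hCR0, hCR⟩ := opBound T hTcont R
  have hθR : ∀ n, N₁ ≤ n → |(p n).1| ≤ R := by
    intro n hn
    have h := (hθle N₁ n).trans (hN₁ N₁ n le_rfl hn).le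
    have h2 := abs_sub_abs_le_abs_sub (p n).1 (p N₁).1
    rw [hRdef]
    linarith
  have hule : ∀ ε' : ℝ, 0 < ε' → ε' ≤ 1 → ∀ m n : ℕ, N₁ ≤ m →
      d0 T (p m) (p n) < ε' → ‖(p n).2 - (p m).2‖ ≤ CR * (C₁ * ε') := by
    intro ε' hε'0 hε'1 m n hm hd
    obtain ⟨L, hLmem, hL⟩ := exists_lt_of_csInf_lt (d0_set_nonempty T (p m) (p n)) hd
    obtain ⟨σ, hσ, h0, h1, rfl⟩ := hLmem
    have h2 := (path_bounds T hT0 hTadd hTcont hσ).2 C₁ 1 zero_le_one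
      (by linarith) hC₁
    rw [h0, h1] at h2
    refine h2.trans ?_
    have hB : ‖T (-(p m).1)‖ ≤ CR := hCR _ (by rw [abs_neg]; exact hθR m hm)
    have hLnn : 0 ≤ pathLen T σ := pathLen_nonneg T σ
    have hLε : pathLen T σ ≤ ε' := by linarith
    exact mul_le_mul hB (by nlinarith) (by positivity) hCR0
  have hcθ : CauchySeq (fun n => (p n).1) := by
    rw [Metric.cauchySeq_iff]
    intro ε hε
    obtain ⟨N, hN⟩ := hC ε hε
    refine ⟨N, fun m hm n hn => ?_⟩
    rw [Real.dist_eq, abs_sub_comm]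
    exact lt_of_le_of_lt (hθle m n) (hN m n hm hn)
  obtain ⟨θL, hthlim⟩ := cauchySeq_tendsto_of_complete hcθ
  have hcu : CauchySeq (fun n => (p n).2) := by
    rw [Metric.cauchySeq_iff]
    intro ε hε
    have hden : (0:ℝ) < CR * C₁ + 1 := by positivity
    set ε' : ℝ := min 1 (ε / (CR * C₁ + 1)) with hε'def
    have hε'0 : 0 < ε' := lt_min one_pos (by positivity)
    have hε'1 : ε' ≤ 1 := min_le_left _ _
    obtain ⟨N, hN⟩ := hC ε' hε'0
    refine ⟨max N N₁, fun m hm n hn => ?_⟩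
    have h := hule ε' hε'0 hε'1 m n (le_trans (le_max_right _ _) hm)
      (hN m n (le_trans (le_max_left _ _) hm) (le_trans (le_max_left _ _) hn))
    rw [dist_eq_norm, norm_sub_rev]
    calc ‖(p n).2 - (p m).2‖ ≤ CR * (C₁ * ε') := h
      _ ≤ CR * C₁ * (ε / (CR * C₁ + 1)) := by
          rw [← mul_assoc]
          exact mul_le_mul_of_nonneg_left (min_le_right _ _) (by positivity)
      _ < (CR * C₁ + 1) * (ε / (CR * C₁ + 1)) := by
          apply mul_lt_mul_of_pos_right (by linarith) (by positivity)
      _ = ε := by field_simp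
  obtain ⟨uL, hulim⟩ := cauchySeq_tendsto_of_complete hcu
  have hthRlim : |θL| ≤ R := by
    apply le_of_tendsto ((continuous_abs.tendsto _).comp hthlim)
    exact Filter.eventually_atTop.mpr ⟨N₁, hθR⟩
  refine ⟨(θL, uL), ?_⟩
  have hbound : ∀ n, N₁ ≤ n → d0 T (p n) (θL, uL) ≤
      Real.sqrt ((θL - (p n).1) ^ 2 + (CR * ‖uL - (p n).2‖) ^ 2) := by
    intro n hn
    apply d0_le T hTcont
    intro s hs
    have hsR : |s| ≤ R := by
      have hsub := Set.uIcc_subset_Icc (a₂ := -R) (b₂ := R)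
        (abs_le.mp (hθR n hn)) (abs_le.mp hthRlim)
      exact abs_le.mpr (hsub hs)
    calc ‖T s (uL - (p n).2)‖ ≤ ‖T s‖ * ‖uL - (p n).2‖ := (T s).le_opNorm _
      _ ≤ CR * ‖uL - (p n).2‖ :=
          mul_le_mul_of_nonneg_right (hCR s hsR) (norm_nonneg _)
  have ht1 : Tendsto (fun n => (θL - (p n).1) ^ 2 + (CR * ‖uL - (p n).2‖) ^ 2)
      atTop (nhds 0) := by
    have t1 : Tendsto (fun n => θL - (p n).1) atTop (nhds 0) := by
      simpa using (tendsto_const_nhds (x := θL)).sub hthlim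
    have t2 : Tendsto (fun n => uL - (p n).2) atTop (nhds (0:X)) := by
      simpa using (tendsto_const_nhds (x := uL)).sub hulim
    have t2' : Tendsto (fun n => CR * ‖uL - (p n).2‖) atTop (nhds 0) := by
      simpa using tendsto_const_nhds.mul t2.norm
    simpa using (t1.pow 2).add (t2'.pow 2)
  have ht2 : Tendsto (fun n =>
      Real.sqrt ((θL - (p n).1) ^ 2 + (CR * ‖uL - (p n).2‖) ^ 2)) atTop (nhds 0) := by
    have := (Real.continuous_sqrt.tendsto 0).comp ht1
    simpa [Function.comp_def] using this
  apply squeeze_zero' (Filter.eventually_atTop.mpr ⟨0, fun n _ => d0_nonneg T _ _⟩)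
    (Filter.eventually_atTop.mpr ⟨N₁, hbound⟩) ht2
end

section
/- With d₀ as above, for every m > 0 and R > 0 there exist constants C_{m,R}, C̃_{m,R} > 0 such that for every (θ,u) ∈ [−m,m] × X and r ∈ (0,R]: (a) d_{ℝ×X}((θ,u),(θ₁,u₁)) ≤ C_{m,R} d₀((θ,u),(θ₁,u₁)) for all (θ₁,u₁) in the d₀-ball of radius r around (θ,u), and (b) d₀((θ,u),(θ₁,u₁)) ≤ C̃_{m,R} d_{ℝ×X}((θ,u),(θ₁,u₁)) for all (θ₁,u₁) in the d_{ℝ×X}-ball of radius C̃_{m,R}^{-1} r around (θ,u). Here d_{ℝ×X}((θ₁,u₁),(θ₂,u₂)) := |θ₁−θ₂| + ‖u₁−u₂‖_X. -/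
open MeasureTheory Filter

lemma aux_sqrt_le (x y : ℝ) : Real.sqrt (x ^ 2 + y ^ 2) ≤ |x| + |y| := by
  rw [show |x| + |y| = Real.sqrt ((|x| + |y|) ^ 2) from
    (Real.sqrt_sq (by positivity)).symm]
  apply Real.sqrt_le_sqrt
  nlinarith [abs_nonneg x, abs_nonneg y, sq_abs x, sq_abs y]

lemma aux_abs_le_sqrt (x y : ℝ) : |x| ≤ Real.sqrt (x ^ 2 + y ^ 2) := by
  rw [← Real.sqrt_sq_eq_abs]
  exact Real.sqrt_le_sqrt (by nlinarith)

lemma aux_abs_le_sqrt' (x y : ℝ) : |y| ≤ Real.sqrt (x ^ 2 + y ^ 2) := by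
  rw [← Real.sqrt_sq_eq_abs]
  exact Real.sqrt_le_sqrt (by nlinarith)

/-- Banach–Steinhaus: a strongly continuous family of operators is uniformly
bounded on compact parameter intervals. -/
lemma T_loc_bound {X : Type*} [NormedAddCommGroup X] [NormedSpace ℝ X] [CompleteSpace X]
    (T : ℝ → X →L[ℝ] X) (hTcont : ∀ u : X, Continuous fun θ : ℝ => T θ u)
    (a b : ℝ) : ∃ K : ℝ, 1 ≤ K ∧ ∀ s ∈ Set.Icc a b, ‖T s‖ ≤ K := by
  obtain ⟨C', hC'⟩ := banach_steinhaus (g := fun s : Set.Icc a b => T s.1)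
    (fun u => (isCompact_Icc.exists_bound_of_continuousOn
      ((hTcont u).continuousOn)).imp fun C hC i => hC i.1 i.2)
  exact ⟨max C' 1, le_max_right _ _, fun s hs => (hC' ⟨s, hs⟩).trans (le_max_left _ _)⟩

/-- local comparison of `d₀` with the product metric
`d_{ℝ×X}((θ₁,u₁),(θ₂,u₂)) = |θ₁−θ₂| + ‖u₁−u₂‖` on `[−m,m] × X`. -/
theorem stmt_4
    {X : Type*} [NormedAddCommGroup X] [NormedSpace ℝ X] [CompleteSpace X]
    (T : ℝ → X →L[ℝ] X)
    (hT0 : T 0 = ContinuousLinearMap.id ℝ X)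
    (hTadd : ∀ θ₁ θ₂ : ℝ, T (θ₁ + θ₂) = (T θ₁).comp (T θ₂))
    (hTcont : ∀ u : X, Continuous fun θ : ℝ => T θ u) :
    ∀ m R : ℝ, 0 < m → 0 < R →
      ∃ C Ct : ℝ, 0 < C ∧ 0 < Ct ∧
        ∀ θ : ℝ, ∀ u : X, |θ| ≤ m → ∀ r : ℝ, 0 < r → r ≤ R →
          (∀ θ₁ : ℝ, ∀ u₁ : X, d0 T (θ, u) (θ₁, u₁) < r →
            |θ - θ₁| + ‖u - u₁‖ ≤ C * d0 T (θ, u) (θ₁, u₁)) ∧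
          (∀ θ₁ : ℝ, ∀ u₁ : X, |θ - θ₁| + ‖u - u₁‖ < Ct⁻¹ * r →
            d0 T (θ, u) (θ₁, u₁) ≤ Ct * (|θ - θ₁| + ‖u - u₁‖)) := by
  intro m R hm hR
  -- uniform bound on the operator norms on `[-(m+R+1), m+R+1]`
  obtain ⟨K, hK1, hKb⟩ := T_loc_bound T hTcont (-(m + R + 1)) (m + R + 1)
  have hK0 : (0:ℝ) < K := lt_of_lt_of_le one_pos hK1
  have hK : ∀ s : ℝ, |s| ≤ m + R + 1 → ‖T s‖ ≤ K := fun s hs =>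
    hKb s (abs_le.mp hs |> fun h => ⟨h.1, h.2⟩)
  -- lower bound on `‖T s v‖` from the group property
  have hKlow : ∀ s : ℝ, |s| ≤ m + R + 1 → ∀ v : X, ‖v‖ ≤ K * ‖T s v‖ := by
    intro s hs v
    have h1 : T (-s) (T s v) = v := by
      have h := hTadd (-s) s
      rw [neg_add_cancel, hT0] at h
      have : (ContinuousLinearMap.id ℝ X) v = ((T (-s)).comp (T s)) v := by rw [h]
      simpa using this.symm
    calc ‖v‖ = ‖T (-s) (T s v)‖ := by rw [h1]
      _ ≤ ‖T (-s)‖ * ‖T s v‖ := (T (-s)).le_opNorm _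
      _ ≤ K * ‖T s v‖ := by
          apply mul_le_mul_of_nonneg_right _ (norm_nonneg _)
          exact hK (-s) (by rwa [abs_neg])
  -- joint continuity of `(θ, v) ↦ T θ v`
  have hTjoint : Continuous fun p : ℝ × X => T p.1 p.2 := by
    rw [continuous_iff_continuousAt]
    rintro ⟨θ₀, v₀⟩
    obtain ⟨K', hK'1, hK'⟩ := T_loc_bound T hTcont (θ₀ - 1) (θ₀ + 1)
    have hK'0 : (0:ℝ) < K' := lt_of_lt_of_le one_pos hK'1
    rw [Metric.continuousAt_iff]
    intro ε hε
    have h2 := (hTcont v₀).continuousAt (x := θ₀)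
    rw [Metric.continuousAt_iff] at h2
    obtain ⟨δ₁, hδ₁, hδ₁'⟩ := h2 (ε / 2) (by linarith)
    refine ⟨min (min δ₁ 1) (ε / (2 * K')), by positivity, ?_⟩
    rintro ⟨θ', v'⟩ h
    simp only [Prod.dist_eq, max_lt_iff] at h
    obtain ⟨h1, h2'⟩ := h
    have hθ1 : dist θ' θ₀ < δ₁ :=
      lt_of_lt_of_le h1 ((min_le_left _ _).trans (min_le_left _ _))
    have hθ2 : |θ' - θ₀| ≤ 1 := by
      rw [← Real.dist_eq]
      exact le_of_lt (lt_of_lt_of_le h1 ((min_le_left _ _).trans (min_le_right _ _)))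
    have hv : ‖v' - v₀‖ ≤ ε / (2 * K') := by
      rw [← dist_eq_norm]
      exact le_of_lt (lt_of_lt_of_le h2' (min_le_right _ _))
    have key : T θ' v' - T θ₀ v₀ = T θ' (v' - v₀) + (T θ' v₀ - T θ₀ v₀) := by
      simp only [map_sub]; abel
    rw [dist_eq_norm, key]
    have b1 : ‖T θ' (v' - v₀)‖ ≤ K' * ‖v' - v₀‖ := by
      calc ‖T θ' (v' - v₀)‖ ≤ ‖T θ'‖ * ‖v' - v₀‖ := (T θ').le_opNorm _
        _ ≤ K' * ‖v' - v₀‖ := by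
            apply mul_le_mul_of_nonneg_right _ (norm_nonneg _)
            have := abs_le.mp hθ2
            have h1 : dist θ' θ₀ ≤ 1 := by rw [Real.dist_eq]; exact hθ2
            exact hK' θ' ⟨by linarith [this.1], by linarith [this.2]⟩
    have b2 : ‖T θ' v₀ - T θ₀ v₀‖ < ε / 2 := by
      rw [← dist_eq_norm]
      exact hδ₁' hθ1
    have b1' : K' * ‖v' - v₀‖ ≤ ε / 2 := by
      calc K' * ‖v' - v₀‖ ≤ K' * (ε / (2 * K')) :=
            mul_le_mul_of_nonneg_left hv (le_of_lt hK'0)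
        _ = ε / 2 := by field_simp
    calc ‖T θ' (v' - v₀) + (T θ' v₀ - T θ₀ v₀)‖
        ≤ ‖T θ' (v' - v₀)‖ + ‖T θ' v₀ - T θ₀ v₀‖ := norm_add_le _ _
      _ < ε := by linarith
  -- the admissible-length sets are nonempty and bounded below by 0
  have hbdd : ∀ p q : ℝ × X, ∀ L ∈ { L : ℝ | ∃ σ : ℝ → ℝ × X,
      ContDiffOn ℝ 1 σ (Set.Icc 0 1) ∧ σ 0 = p ∧ σ 1 = q ∧ L = pathLen T σ }, 0 ≤ L := by
    rintro p q L ⟨σ, -, -, -, rfl⟩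
    exact intervalIntegral.integral_nonneg zero_le_one fun τ _ => Real.sqrt_nonneg _
  -- the straight-line path
  have hstraight : ∀ p q : ℝ × X, ∃ σ : ℝ → ℝ × X,
      ContDiffOn ℝ 1 σ (Set.Icc 0 1) ∧ σ 0 = p ∧ σ 1 = q ∧
      (∀ τ : ℝ, deriv σ τ = q - p) ∧ (∀ τ : ℝ, σ τ = p + τ • (q - p)) := by
    intro p q
    refine ⟨fun τ => p + τ • (q - p), ?_, by simp, by simp, ?_, fun τ => rfl⟩
    · exact (contDiff_const.add (contDiff_id.smul contDiff_const)).contDiffOn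
    · intro τ
      have : HasDerivAt (fun τ : ℝ => p + τ • (q - p)) (q - p) τ := by
        have h := ((hasDerivAt_id τ).smul_const (q - p)).const_add p
        simpa using h
      exact this.deriv
  have hnonempty : ∀ p q : ℝ × X, Set.Nonempty { L : ℝ | ∃ σ : ℝ → ℝ × X,
      ContDiffOn ℝ 1 σ (Set.Icc 0 1) ∧ σ 0 = p ∧ σ 1 = q ∧ L = pathLen T σ } := by
    intro p q
    obtain ⟨σ, hsm, h0, h1, -, -⟩ := hstraight p q
    exact ⟨pathLen T σ, σ, hsm, h0, h1, rfl⟩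
  refine ⟨2 * K, R + K, by positivity, by positivity, ?_⟩
  intro θ u hθ r hr hrR
  constructor
  · -- part (a): product metric ≤ C · d0
    intro θ₁ u₁ hd
    -- key estimate for any single admissible path of length < R
    have hpath : ∀ L ∈ { L : ℝ | ∃ σ : ℝ → ℝ × X,
        ContDiffOn ℝ 1 σ (Set.Icc 0 1) ∧ σ 0 = (θ, u) ∧ σ 1 = (θ₁, u₁) ∧ L = pathLen T σ },
        L < R → |θ - θ₁| + ‖u - u₁‖ ≤ 2 * K * L := by
      rintro L ⟨σ, hσ, hσ0, hσ1, rfl⟩ hLR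
      set g : ℝ → ℝ × X := derivWithin σ (Set.Icc 0 1) with hg
      have hgc : ContinuousOn g (Set.Icc 0 1) :=
        hσ.continuousOn_derivWithin (uniqueDiffOn_Icc one_pos) le_rfl
      have hσc : ContinuousOn σ (Set.Icc 0 1) := hσ.continuousOn
      have hder : ∀ τ ∈ Set.Ioo (0:ℝ) 1, HasDerivAt σ (g τ) τ := by
        intro τ hτ
        exact ((hσ.differentiableOn one_ne_zero τ (Set.Ioo_subset_Icc_self hτ)
          ).hasDerivWithinAt).hasDerivAt (Icc_mem_nhds hτ.1 hτ.2)
      set φ : ℝ → ℝ := fun τ => Real.sqrt ((g τ).1 ^ 2 + ‖T ((σ τ).1) (g τ).2‖ ^ 2) with hφ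
      have hφc : ContinuousOn φ (Set.Icc 0 1) := by
        apply Real.continuous_sqrt.comp_continuousOn
        exact (hgc.fst.pow 2).add
          (((hTjoint.comp_continuousOn (f := fun τ => ((σ τ).1, (g τ).2)) (hσc.fst.prodMk hgc.snd)).norm).pow 2)
      have hφint : IntervalIntegrable φ volume 0 1 := by
        apply ContinuousOn.intervalIntegrable
        rw [Set.uIcc_of_le zero_le_one]
        exact hφc
      have hlen : pathLen T σ = ∫ τ in (0:ℝ)..1, φ τ := by
        apply intervalIntegral.integral_congr_ae
        have h0 : ∀ᵐ τ : ℝ ∂volume, τ ≠ 1 := by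
          refine ae_iff.mpr ?_
          have : {τ : ℝ | ¬τ ≠ 1} = {1} := by ext τ; simp
          rw [this]
          exact Real.volume_singleton
        filter_upwards [h0] with τ hτ hmem
        rw [Set.uIoc_of_le zero_le_one] at hmem
        have hτ' : τ ∈ Set.Ioo (0:ℝ) 1 := ⟨hmem.1, lt_of_le_of_ne hmem.2 hτ⟩
        rw [(hder τ hτ').deriv]
      have hφnonneg : ∀ τ, 0 ≤ φ τ := fun τ => Real.sqrt_nonneg _
      have hLnonneg : 0 ≤ pathLen T σ := by
        rw [hlen]
        exact intervalIntegral.integral_nonneg zero_le_one fun τ _ => hφnonneg τ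
      -- FTC for the first coordinate on `[0, t]`
      have hFTC1 : ∀ t ∈ Set.Icc (0:ℝ) 1,
          ∫ τ in (0:ℝ)..t, (g τ).1 = (σ t).1 - (σ 0).1 := by
        intro t ht
        apply intervalIntegral.integral_eq_sub_of_hasDeriv_right_of_le
          (f := fun τ => (σ τ).1) ht.1
        · exact hσc.fst.mono (Set.Icc_subset_Icc le_rfl ht.2)
        · intro x hx
          have hx' : x ∈ Set.Ioo (0:ℝ) 1 := ⟨hx.1, lt_of_lt_of_le hx.2 ht.2⟩
          exact (ContinuousLinearMap.fst ℝ ℝ X).hasFDerivAt.comp_hasDerivWithinAt x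
            ((hder x hx').hasDerivWithinAt)
        · refine ContinuousOn.intervalIntegrable ?_
          rw [Set.uIcc_of_le ht.1]
          exact hgc.fst.mono (Set.Icc_subset_Icc le_rfl ht.2)
      have hFTC2 : ∫ τ in (0:ℝ)..1, (g τ).2 = (σ 1).2 - (σ 0).2 := by
        apply intervalIntegral.integral_eq_sub_of_hasDeriv_right_of_le
          (f := fun τ => (σ τ).2) zero_le_one
        · exact hσc.snd
        · intro x hx
          exact (ContinuousLinearMap.snd ℝ ℝ X).hasFDerivAt.comp_hasDerivWithinAt x
            ((hder x hx).hasDerivWithinAt)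
        · apply ContinuousOn.intervalIntegrable
          rw [Set.uIcc_of_le (zero_le_one : (0:ℝ) ≤ 1)]
          exact hgc.snd
      -- pointwise comparison with φ
      have hb1 : ∀ τ, |(g τ).1| ≤ φ τ := fun τ => aux_abs_le_sqrt _ _
      -- `∫₀ᵗ |g₁| ≤ ∫₀¹ φ` for `t ∈ [0,1]`
      have habs_int : ∀ t ∈ Set.Icc (0:ℝ) 1,
          IntervalIntegrable (fun τ => |(g τ).1|) volume 0 t := by
        intro t ht
        refine ContinuousOn.intervalIntegrable ?_
        rw [Set.uIcc_of_le ht.1]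
        exact (hgc.fst.mono (Set.Icc_subset_Icc le_rfl ht.2)).abs
      have hint_le : ∀ t ∈ Set.Icc (0:ℝ) 1,
          (∫ τ in (0:ℝ)..t, |(g τ).1|) ≤ ∫ τ in (0:ℝ)..1, φ τ := by
        intro t ht
        have hsub1 : Set.uIcc (0:ℝ) t ⊆ Set.uIcc (0:ℝ) 1 := by
          rw [Set.uIcc_of_le ht.1, Set.uIcc_of_le zero_le_one]
          exact Set.Icc_subset_Icc le_rfl ht.2
        have hsub2 : Set.uIcc t (1:ℝ) ⊆ Set.uIcc (0:ℝ) 1 := by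
          rw [Set.uIcc_of_le ht.2, Set.uIcc_of_le zero_le_one]
          exact Set.Icc_subset_Icc ht.1 le_rfl
        have h1 : (∫ τ in (0:ℝ)..t, |(g τ).1|) ≤ ∫ τ in (0:ℝ)..t, φ τ := by
          apply intervalIntegral.integral_mono_on ht.1 (habs_int t ht)
            (hφint.mono_set hsub1)
          exact fun x _ => hb1 x
        have h2 : (∫ τ in (0:ℝ)..t, φ τ) ≤ ∫ τ in (0:ℝ)..1, φ τ := by
          have hsplit : (∫ τ in (0:ℝ)..t, φ τ) + (∫ τ in t..(1:ℝ), φ τ)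
              = ∫ τ in (0:ℝ)..1, φ τ :=
            intervalIntegral.integral_add_adjacent_intervals
              (hφint.mono_set hsub1) (hφint.mono_set hsub2)
          have h3 : 0 ≤ ∫ τ in t..(1:ℝ), φ τ :=
            intervalIntegral.integral_nonneg ht.2 fun τ _ => hφnonneg τ
          linarith
        linarith
      -- the θ-component of the path stays in `[-(m+R), m+R]`
      have hθpath : ∀ t ∈ Set.Icc (0:ℝ) 1, |(σ t).1| ≤ m + R := by
        intro t ht
        have h1 : (σ t).1 - θ = ∫ τ in (0:ℝ)..t, (g τ).1 := by
          rw [hFTC1 t ht, hσ0]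
        have h2 : |(σ t).1 - θ| ≤ ∫ τ in (0:ℝ)..t, |(g τ).1| := by
          rw [h1]
          simpa [Real.norm_eq_abs] using
            intervalIntegral.norm_integral_le_integral_norm
              (f := fun τ => (g τ).1) (μ := volume) ht.1
        have h3 : |(σ t).1 - θ| ≤ pathLen T σ := by
          rw [hlen]; exact h2.trans (hint_le t ht)
        have := abs_sub_abs_le_abs_sub ((σ t).1) θ
        have h4 : |(σ t).1| ≤ |θ| + |(σ t).1 - θ| := by
          calc |(σ t).1| = |θ + ((σ t).1 - θ)| := by ring_nf
            _ ≤ |θ| + |(σ t).1 - θ| := abs_add_le _ _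
        linarith
      have hb2 : ∀ τ ∈ Set.Icc (0:ℝ) 1, ‖(g τ).2‖ ≤ K * φ τ := by
        intro τ hτ
        have h1 : ‖(g τ).2‖ ≤ K * ‖T ((σ τ).1) (g τ).2‖ :=
          hKlow ((σ τ).1) (by linarith [hθpath τ hτ]) ((g τ).2)
        have h2 : ‖T ((σ τ).1) (g τ).2‖ ≤ φ τ := by
          have := aux_abs_le_sqrt' ((g τ).1) (‖T ((σ τ).1) (g τ).2‖)
          rwa [abs_of_nonneg (norm_nonneg _)] at this
        calc ‖(g τ).2‖ ≤ K * ‖T ((σ τ).1) (g τ).2‖ := h1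
          _ ≤ K * φ τ := mul_le_mul_of_nonneg_left h2 (le_of_lt hK0)
      -- conclude
      have hA : |θ - θ₁| ≤ pathLen T σ := by
        have h1 : θ₁ - θ = ∫ τ in (0:ℝ)..1, (g τ).1 := by
          rw [hFTC1 1 (by norm_num), hσ0, hσ1]
        have h2 : |θ₁ - θ| ≤ ∫ τ in (0:ℝ)..1, |(g τ).1| := by
          rw [h1]
          simpa [Real.norm_eq_abs] using
            intervalIntegral.norm_integral_le_integral_norm
              (f := fun τ => (g τ).1) (μ := volume) zero_le_one
        rw [abs_sub_comm, hlen]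
        exact h2.trans (hint_le 1 (by norm_num))
      have hB : ‖u - u₁‖ ≤ K * pathLen T σ := by
        have h1 : u₁ - u = ∫ τ in (0:ℝ)..1, (g τ).2 := by
          rw [hFTC2, hσ0, hσ1]
        have h2 : ‖u₁ - u‖ ≤ ∫ τ in (0:ℝ)..1, ‖(g τ).2‖ := by
          rw [h1]
          exact intervalIntegral.norm_integral_le_integral_norm zero_le_one
        have h3 : (∫ τ in (0:ℝ)..1, ‖(g τ).2‖) ≤ ∫ τ in (0:ℝ)..1, K * φ τ := by
          apply intervalIntegral.integral_mono_on zero_le_one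
          · apply ContinuousOn.intervalIntegrable
            rw [Set.uIcc_of_le (zero_le_one : (0:ℝ) ≤ 1)]
            exact hgc.snd.norm
          · exact (hφint.const_mul K)
          · exact hb2
        have h4 : (∫ τ in (0:ℝ)..1, K * φ τ) = K * ∫ τ in (0:ℝ)..1, φ τ :=
          intervalIntegral.integral_const_mul K φ
        rw [norm_sub_rev, hlen]
        calc ‖u₁ - u‖ ≤ ∫ τ in (0:ℝ)..1, ‖(g τ).2‖ := h2
          _ ≤ ∫ τ in (0:ℝ)..1, K * φ τ := h3
          _ = K * ∫ τ in (0:ℝ)..1, φ τ := h4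
      calc |θ - θ₁| + ‖u - u₁‖ ≤ pathLen T σ + K * pathLen T σ := add_le_add hA hB
        _ ≤ 2 * K * pathLen T σ := by nlinarith
    -- pass to the infimum
    have hd0nonneg : 0 ≤ d0 T (θ, u) (θ₁, u₁) :=
      le_csInf (hnonempty _ _) (hbdd _ _)
    refine le_of_forall_pos_le_add ?_
    intro ε hε
    have hlt : sInf { L : ℝ | ∃ σ : ℝ → ℝ × X,
        ContDiffOn ℝ 1 σ (Set.Icc 0 1) ∧ σ 0 = (θ, u) ∧ σ 1 = (θ₁, u₁) ∧ L = pathLen T σ }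
        < min r (d0 T (θ, u) (θ₁, u₁) + ε / (2 * K)) := by
      apply lt_min
      · exact hd
      · exact lt_add_of_pos_right _ (by positivity)
    obtain ⟨L, hL, hLlt⟩ := exists_lt_of_csInf_lt (hnonempty _ _) hlt
    have hLR : L < R := lt_of_lt_of_le (lt_of_lt_of_le hLlt (min_le_left _ _)) hrR
    have h1 := hpath L hL hLR
    have h2 : L ≤ d0 T (θ, u) (θ₁, u₁) + ε / (2 * K) :=
      le_of_lt (lt_of_lt_of_le hLlt (min_le_right _ _))
    calc |θ - θ₁| + ‖u - u₁‖ ≤ 2 * K * L := h1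
      _ ≤ 2 * K * (d0 T (θ, u) (θ₁, u₁) + ε / (2 * K)) := by nlinarith
      _ = 2 * K * d0 T (θ, u) (θ₁, u₁) + ε := by field_simp
  · -- part (b): d0 ≤ Ct · product metric, via the straight-line path
    intro θ₁ u₁ hd
    have hCt0 : (0:ℝ) < R + K := by positivity
    have hsmall : |θ - θ₁| + ‖u - u₁‖ ≤ 1 := by
      have h1 : (R + K)⁻¹ * r ≤ 1 := by
        rw [inv_mul_le_iff₀ hCt0]
        nlinarith
      linarith [hd.le.trans h1]
    obtain ⟨σ, hsm, h0, h1, hderiv, hform⟩ := hstraight (θ, u) (θ₁, u₁)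
    have hvfst : ((θ₁, u₁) - (θ, u) : ℝ × X).1 = θ₁ - θ := rfl
    have hvsnd : ((θ₁, u₁) - (θ, u) : ℝ × X).2 = u₁ - u := rfl
    have hlen : pathLen T σ = ∫ τ in (0:ℝ)..1,
        Real.sqrt ((θ₁ - θ) ^ 2 + ‖T ((σ τ).1) (u₁ - u)‖ ^ 2) := by
      unfold pathLen
      congr 1
      funext τ
      rw [hderiv τ, hvfst, hvsnd]
    have hintc : Continuous fun τ : ℝ =>
        Real.sqrt ((θ₁ - θ) ^ 2 + ‖T ((σ τ).1) (u₁ - u)‖ ^ 2) := by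
      apply Real.continuous_sqrt.comp
      apply continuous_const.add
      apply Continuous.pow
      apply Continuous.norm
      exact hTjoint.comp ((continuous_fst.comp (by
        have : Continuous σ := by
          have : σ = fun τ : ℝ => (θ, u) + τ • ((θ₁, u₁) - (θ, u)) := funext hform
          rw [this]
          exact continuous_const.add (continuous_id.smul continuous_const)
        exact this)).prodMk continuous_const)
    have hbound : ∀ τ ∈ Set.Icc (0:ℝ) 1,
        Real.sqrt ((θ₁ - θ) ^ 2 + ‖T ((σ τ).1) (u₁ - u)‖ ^ 2)
          ≤ K * (|θ - θ₁| + ‖u - u₁‖) := by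
      intro τ hτ
      have hθτ : |(σ τ).1| ≤ m + R + 1 := by
        have : (σ τ).1 = θ + τ * (θ₁ - θ) := by rw [hform τ]; rfl
        rw [this]
        have h1 : |τ * (θ₁ - θ)| ≤ |θ₁ - θ| := by
          rw [abs_mul]
          have : |τ| ≤ 1 := abs_le.mpr ⟨by linarith [hτ.1], hτ.2⟩
          nlinarith [abs_nonneg (θ₁ - θ)]
        have h2 : |θ₁ - θ| ≤ 1 := by
          rw [abs_sub_comm]
          calc |θ - θ₁| ≤ |θ - θ₁| + ‖u - u₁‖ := le_add_of_nonneg_right (norm_nonneg _)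
            _ ≤ 1 := hsmall
        calc |θ + τ * (θ₁ - θ)| ≤ |θ| + |τ * (θ₁ - θ)| := abs_add_le _ _
          _ ≤ m + 1 := by linarith
          _ ≤ m + R + 1 := by linarith
      have hTb : ‖T ((σ τ).1) (u₁ - u)‖ ≤ K * ‖u₁ - u‖ := by
        calc ‖T ((σ τ).1) (u₁ - u)‖ ≤ ‖T ((σ τ).1)‖ * ‖u₁ - u‖ :=
              (T ((σ τ).1)).le_opNorm _
          _ ≤ K * ‖u₁ - u‖ :=
              mul_le_mul_of_nonneg_right (hK _ hθτ) (norm_nonneg _)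
      calc Real.sqrt ((θ₁ - θ) ^ 2 + ‖T ((σ τ).1) (u₁ - u)‖ ^ 2)
          ≤ |θ₁ - θ| + |‖T ((σ τ).1) (u₁ - u)‖| := aux_sqrt_le _ _
        _ = |θ₁ - θ| + ‖T ((σ τ).1) (u₁ - u)‖ := by
            rw [abs_of_nonneg (norm_nonneg _)]
        _ ≤ |θ₁ - θ| + K * ‖u₁ - u‖ := by linarith
        _ ≤ K * (|θ - θ₁| + ‖u - u₁‖) := by
            rw [abs_sub_comm θ₁ θ, norm_sub_rev u₁ u]
            nlinarith [abs_nonneg (θ - θ₁), norm_nonneg (u - u₁)]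
    have hlen_le : pathLen T σ ≤ K * (|θ - θ₁| + ‖u - u₁‖) := by
      rw [hlen]
      calc (∫ τ in (0:ℝ)..1, Real.sqrt ((θ₁ - θ) ^ 2 + ‖T ((σ τ).1) (u₁ - u)‖ ^ 2))
          ≤ ∫ _ in (0:ℝ)..1, K * (|θ - θ₁| + ‖u - u₁‖) := by
            apply intervalIntegral.integral_mono_on zero_le_one
              (hintc.intervalIntegrable _ _) (intervalIntegrable_const) hbound
        _ = K * (|θ - θ₁| + ‖u - u₁‖) := by simp
    have hd0le : d0 T (θ, u) (θ₁, u₁) ≤ pathLen T σ := by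
      apply csInf_le ⟨0, fun L hL => hbdd _ _ L hL⟩
      exact ⟨σ, hsm, h0, h1, rfl⟩
    calc d0 T (θ, u) (θ₁, u₁) ≤ pathLen T σ := hd0le
      _ ≤ K * (|θ - θ₁| + ‖u - u₁‖) := hlen_le
      _ ≤ (R + K) * (|θ - θ₁| + ‖u - u₁‖) := by
          nlinarith [abs_nonneg (θ - θ₁), norm_nonneg (u - u₁)]
end
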